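/- Let $m \geq 2$ and let $(k_1,\dots,k_{m-1}) \in \mathbb{Z}^{m-1}$ satisfy $m\sum_{i=1}^{m-1} k_i^2 - (\sum_{i=1}^{m-1} k_i)^2 = m-1$. Write $\lambda = \frac{1}{m-1}\sum_{i=1}^{m-1} k_i$. Then $|\lambda| \leq 1$, each $k_i \in \{-1,0,1\}$, and each nonzero $k_i$ has the same sign as $\lambda$. -/
import Mathlib


/-- If `k ∈ ℤ^{m-1}` satisfies `m ∑ kᵢ² - (∑ kᵢ)² = m - 1` and `λ = (∑ kᵢ)/(m-1)`, then
`|λ| ≤ 1`, each `kᵢ ∈ {-1,0,1}`, and each nonzero `kᵢ` has the same sign as `λ`. -/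
theorem stmt2 (m : ℕ) (hm : 2 ≤ m) (k : Fin (m - 1) → ℤ)
    (hk : (m : ℤ) * (∑ i, (k i) ^ 2) - (∑ i, k i) ^ 2 = (m : ℤ) - 1)
    (lam : ℝ) (hlam : lam = (∑ i, (k i : ℝ)) / ((m : ℝ) - 1)) :
    |lam| ≤ 1 ∧ (∀ i, k i = -1 ∨ k i = 0 ∨ k i = 1) ∧
      ∀ i, k i ≠ 0 → 0 < (k i : ℝ) * lam := by
  set S : ℤ := ∑ i, k i with hS
  set Q : ℤ := ∑ i, (k i) ^ 2 with hQ
  have hcard : ((Finset.univ : Finset (Fin (m - 1))).card : ℤ) = (m : ℤ) - 1 := by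
    simp [Finset.card_univ]
    push_cast [Nat.cast_sub (by omega : 1 ≤ m)]
    ring
  -- Cauchy–Schwarz for a perturbed vector
  have key : ∀ (i : Fin (m - 1)) (c : ℤ),
      (S - k i + c) ^ 2 ≤ ((m : ℤ) - 1) * (Q - (k i) ^ 2 + c ^ 2) := by
    intro i c
    have hcs := sq_sum_le_card_mul_sum_sq (s := (Finset.univ : Finset (Fin (m-1))))
      (f := Function.update k i c)
    have hsum : ∑ j, Function.update k i c j = S - k i + c := by
      rw [Finset.sum_update_of_mem (Finset.mem_univ i)]
      rw [Finset.sum_sdiff_eq_sub (by simp)]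
      simp [hS]; ring
    have hsq : ∑ j, (Function.update k i c j) ^ 2 = Q - (k i) ^ 2 + c ^ 2 := by
      have : (fun j => (Function.update k i c j) ^ 2)
          = Function.update (fun j => (k j) ^ 2) i (c ^ 2) := by
        funext j
        exact Function.apply_update (fun _ x => x ^ 2) k i c j
      rw [show ∑ j, (Function.update k i c j) ^ 2
          = ∑ j, Function.update (fun j => (k j) ^ 2) i (c ^ 2) j from by rw [this]]
      rw [Finset.sum_update_of_mem (Finset.mem_univ i)]
      rw [Finset.sum_sdiff_eq_sub (by simp)]
      simp [hQ]; ring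
    rw [hsum, hsq, hcard] at hcs
    exact hcs
  have hcs0 : S ^ 2 ≤ ((m : ℤ) - 1) * Q := by
    have := key ⟨0, by omega⟩ (k ⟨0, by omega⟩)
    simpa using this
  have hQsq : ∀ i, (k i) ^ 2 ≤ Q := by
    intro i
    rw [hQ]
    exact Finset.single_le_sum (fun j _ => sq_nonneg (k j)) (Finset.mem_univ i)
  have hm1 : (2 : ℤ) ≤ (m : ℤ) := by exact_mod_cast hm
  -- Q ≤ m - 1
  have hQle : Q ≤ (m : ℤ) - 1 := by nlinarith
  -- S² ≤ (m-1)²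
  have hSle : S ^ 2 ≤ ((m : ℤ) - 1) ^ 2 := by nlinarith
  -- perturbation bounds: S - (m-1) ≤ m * k i ≤ S + (m-1)
  have hub : ∀ i, (m : ℤ) * k i ≤ S + ((m : ℤ) - 1) := by
    intro i
    have h := key i (k i - 1)
    nlinarith [hQsq i]
  have hlb : ∀ i, S - ((m : ℤ) - 1) ≤ (m : ℤ) * k i := by
    intro i
    have h := key i (k i + 1)
    nlinarith [hQsq i]
  have hSabs : -((m : ℤ) - 1) ≤ S ∧ S ≤ (m : ℤ) - 1 := by
    constructor <;> nlinarith [hSle]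
  have hrange : ∀ i, k i = -1 ∨ k i = 0 ∨ k i = 1 := by
    intro i
    have h1 := hub i
    have h2 := hlb i
    have := hSabs.1; have := hSabs.2
    have : -1 ≤ k i ∧ k i ≤ 1 := by constructor <;> nlinarith
    omega
  -- real facts
  have hmr : (1 : ℝ) ≤ (m : ℝ) - 1 := by
    have : (2 : ℝ) ≤ (m : ℝ) := by exact_mod_cast hm
    linarith
  have hmpos : (0 : ℝ) < (m : ℝ) - 1 := by linarith
  have hSr : |(S : ℝ)| ≤ (m : ℝ) - 1 := by
    rw [abs_le]
    constructor <;> [exact_mod_cast hSabs.1; exact_mod_cast hSabs.2]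
  have hlamS : lam = (S : ℝ) / ((m : ℝ) - 1) := by
    rw [hlam, hS]; push_cast; ring_nf
  refine ⟨?_, hrange, ?_⟩
  · rw [hlamS, abs_div, abs_of_pos hmpos, div_le_one hmpos]
    exact hSr
  · intro i hi
    rcases hrange i with h | h | h
    · have hSneg : S ≤ -1 := by
        have := hlb i
        rw [h] at this
        nlinarith
      have : (S : ℝ) ≤ -1 := by exact_mod_cast hSneg
      have hdiv : (S : ℝ) / ((m : ℝ) - 1) < 0 :=
        div_neg_of_neg_of_pos (by linarith) hmpos
      rw [hlamS, h]
      push_cast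
      nlinarith
    · exact absurd h hi
    · have hSpos : 1 ≤ S := by
        have := hub i
        rw [h] at this
        nlinarith
      have : (1 : ℝ) ≤ (S : ℝ) := by exact_mod_cast hSpos
      have hdiv : 0 < (S : ℝ) / ((m : ℝ) - 1) :=
        div_pos (by linarith) hmpos
      rw [hlamS, h]
      push_cast
      nlinarith
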